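/- arXiv:1302.1329 — 8 statements merged into one kernel-verified Lean document; each statement's English description precedes it below -/
import Mathlib

section
/- The map τ on partitions with maximal hook length less than N, defined by τ(λ_1,…,λ_m) = (N-m-1, λ_1-1, …, λ_m-1) with trailing zeros removed, is an isometry for the metric d(λ,μ) = |λ| + |μ| - 2|λ∩μ|. -/
def IsPartition (l : List ℕ) : Prop := l.Pairwise (· ≥ ·) ∧ ∀ x ∈ l, 0 < x

/-- Maximal hook length of a partition (0 for the empty partition). -/
def maxHook (l : List ℕ) : ℕ :=
  match l with
  | [] => 0
  | a :: t => a + t.length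

def dP (l m : List ℕ) : ℤ :=
  (l.sum : ℤ) + (m.sum : ℤ) - 2 * ((l.zipWith min m).sum : ℤ)

/-- τ(λ) = (N-m-1, λ₁-1, …, λ_m-1) with trailing zeros removed. -/
def tauP (N : ℕ) (l : List ℕ) : List ℕ :=
  ((N - l.length - 1) :: l.map (· - 1)).filter (fun x => decide (0 < x))

namespace TauAux

lemma sum_filter_pos (l : List ℕ) :
    (l.filter (fun x => decide (0 < x))).sum = l.sum := by
  induction l with
  | nil => simp
  | cons a t ih =>
    by_cases h : 0 < a
    · simp [List.filter_cons, h, ih]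
    · simp [List.filter_cons, h, ih]
      omega

lemma zip_sum_zero_left : ∀ (a b : List ℕ), (∀ x ∈ a, x = 0) →
    (List.zipWith min a b).sum = 0
  | [], _, _ => by simp
  | _ :: _, [], _ => by simp
  | x :: a, y :: b, h => by
    have hx : x = 0 := h x (by simp)
    simp [hx, zip_sum_zero_left a b (fun z hz => h z (by simp [hz]))]

lemma zip_sum_zero_right : ∀ (a b : List ℕ), (∀ x ∈ b, x = 0) →
    (List.zipWith min a b).sum = 0
  | [], _, _ => by simp
  | _ :: _, [], _ => by simp
  | x :: a, y :: b, h => by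
    have hy : y = 0 := h y (by simp)
    simp [hy, zip_sum_zero_right a b (fun z hz => h z (by simp [hz]))]

lemma zip_filter : ∀ (a b : List ℕ), a.Pairwise (· ≥ ·) → b.Pairwise (· ≥ ·) →
    ((a.filter (fun x => decide (0 < x))).zipWith min
      (b.filter (fun x => decide (0 < x)))).sum = (List.zipWith min a b).sum
  | [], b, _, _ => by simp
  | x :: a, [], _, _ => by simp
  | x :: a, y :: b, ha, hb => by
    rcases List.pairwise_cons.mp ha with ⟨hxa, ha'⟩
    rcases List.pairwise_cons.mp hb with ⟨hyb, hb'⟩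
    rcases Nat.eq_zero_or_pos x with hx | hx
    · have hall : ∀ z ∈ x :: a, z = 0 := by
        intro z hz
        rcases List.mem_cons.mp hz with h | h
        · omega
        · have := hxa z h; omega
      have h1 : (x :: a).filter (fun x => decide (0 < x)) = [] := by
        rw [List.filter_eq_nil_iff]
        intro z hz
        simp [hall z hz]
      rw [h1, zip_sum_zero_left _ _ hall]
      simp
    rcases Nat.eq_zero_or_pos y with hy | hy
    · have hall : ∀ z ∈ y :: b, z = 0 := by
        intro z hz
        rcases List.mem_cons.mp hz with h | h
        · omega
        · have := hyb z h; omega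
      have h1 : (y :: b).filter (fun x => decide (0 < x)) = [] := by
        rw [List.filter_eq_nil_iff]
        intro z hz
        simp [hall z hz]
      rw [h1, zip_sum_zero_right _ _ hall]
      simp
    · simp only [List.filter_cons, decide_eq_true_eq, hx, hy, if_pos,
        List.zipWith_cons_cons, List.sum_cons]
      rw [zip_filter a b ha' hb']

lemma dP_filter (a b : List ℕ) (ha : a.Pairwise (· ≥ ·)) (hb : b.Pairwise (· ≥ ·)) :
    dP (a.filter (fun x => decide (0 < x))) (b.filter (fun x => decide (0 < x))) = dP a b := by
  unfold dP
  rw [sum_filter_pos, sum_filter_pos, zip_filter a b ha hb]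

lemma length_le_sum (l : List ℕ) (h : ∀ x ∈ l, 0 < x) : l.length ≤ l.sum := by
  induction l with
  | nil => simp
  | cons a t ih =>
    have h1 := h a (by simp)
    have h2 := ih (fun z hz => h z (by simp [hz]))
    simp only [List.length_cons, List.sum_cons]
    omega

lemma sum_map_sub_one (l : List ℕ) (h : ∀ x ∈ l, 0 < x) :
    (l.map (· - 1)).sum = l.sum - l.length := by
  induction l with
  | nil => simp
  | cons a t ih =>
    have h1 := h a (by simp)
    have h2 := ih (fun z hz => h z (by simp [hz]))
    have h3 := length_le_sum t (fun z hz => h z (by simp [hz]))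
    simp only [List.map_cons, List.sum_cons, List.length_cons]
    omega

lemma zip_map_sub : ∀ (a b : List ℕ),
    List.zipWith min (a.map (· - 1)) (b.map (· - 1)) = (List.zipWith min a b).map (· - 1)
  | [], _ => by simp
  | _ :: _, [] => by simp
  | x :: a, y :: b => by
    simp only [List.map_cons, List.zipWith_cons_cons, zip_map_sub a b]
    congr 1
    omega

lemma pos_zip : ∀ (a b : List ℕ), (∀ x ∈ a, 0 < x) → (∀ x ∈ b, 0 < x) →
    ∀ x ∈ List.zipWith min a b, 0 < x
  | [], _, _, _ => by simp
  | _ :: _, [], _, _ => by simp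
  | x :: a, y :: b, ha, hb => by
    intro z hz
    rcases List.mem_cons.mp hz with h | h
    · have := ha x (by simp); have := hb y (by simp); omega
    · exact pos_zip a b (fun u hu => ha u (by simp [hu])) (fun u hu => hb u (by simp [hu])) z h

lemma sorted_tau (N : ℕ) (l : List ℕ) (hl : IsPartition l) (hk : maxHook l < N) :
    ((N - l.length - 1) :: l.map (· - 1)).Pairwise (· ≥ ·) := by
  rw [List.pairwise_cons]
  constructor
  · intro y hy
    rcases List.mem_map.mp hy with ⟨z, hz, rfl⟩
    cases l with
    | nil => simp at hz
    | cons x t =>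
      have hx : z ≤ x := by
        rcases List.mem_cons.mp hz with h | h
        · omega
        · exact (List.pairwise_cons.mp hl.1).1 z h
      have hmk : x + t.length < N := hk
      simp only [List.length_cons]
      omega
  · exact List.Pairwise.map _ (fun a b h => Nat.sub_le_sub_right h 1) hl.1

lemma len_lt (N : ℕ) (hN : 1 ≤ N) (l : List ℕ) (hl : IsPartition l) (hk : maxHook l < N) :
    l.length < N := by
  cases l with
  | nil => simpa using Nat.pos_of_ne_zero (by omega : N ≠ 0)
  | cons x t =>
    have hx : 0 < x := hl.2 x (by simp)
    have : x + t.length < N := hk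
    simp only [List.length_cons]
    omega

end TauAux

theorem tauP_isometry (N : ℕ) (hN : 1 ≤ N) :
    ∀ l m : List ℕ, IsPartition l → maxHook l < N → IsPartition m → maxHook m < N →
      dP (tauP N l) (tauP N m) = dP l m := by
  intro l m hl hkl hm hkm
  have hlen_l := TauAux.len_lt N hN l hl hkl
  have hlen_m := TauAux.len_lt N hN m hm hkm
  have hsl := TauAux.sorted_tau N l hl hkl
  have hsm := TauAux.sorted_tau N m hm hkm
  rw [tauP, tauP, TauAux.dP_filter _ _ hsl hsm]
  unfold dP
  simp only [List.sum_cons, List.zipWith_cons_cons, TauAux.zip_map_sub,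
    TauAux.sum_map_sub_one l hl.2, TauAux.sum_map_sub_one m hm.2,
    TauAux.sum_map_sub_one _ (TauAux.pos_zip l m hl.2 hm.2), List.length_zipWith]
  have h1 := TauAux.length_le_sum l hl.2
  have h2 := TauAux.length_le_sum m hm.2
  have h3 := TauAux.length_le_sum _ (TauAux.pos_zip l m hl.2 hm.2)
  rw [List.length_zipWith] at h3
  have h4 : (List.zipWith min l m).sum ≤ l.sum := by
    have : ∀ (a b : List ℕ), (List.zipWith min a b).sum ≤ a.sum := by
      intro a
      induction a with
      | nil => simp
      | cons x t ih =>
        intro b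
        cases b with
        | nil => simp
        | cons y s =>
          simp only [List.zipWith_cons_cons, List.sum_cons]
          have := ih s
          omega
    exact this l m
  omega
end

section
/- Let N = 2k+1 and α_0 = (k-1, k-2, …, 2, 1) the staircase partition. Then for all i, j ∈ {0,…,N-1}, the partitions α_i = τ^i(α_0) satisfy d(α_i, α_j) = 2·min(|j-i|, N-|j-i|); that is, the orbit of the staircase under τ forms an N-cycle metric space with edge length 2. -/
/-- The staircase partition (m, m-1, …, 2, 1). -/
def staircase (m : ℕ) : List ℕ := (List.range m).map (fun i => m - i)

def pre (c n : ℕ) : List ℕ := (List.range n).map (fun t => c - t)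

def alpha (k r : ℕ) : List ℕ :=
  if r ≤ k then pre (k+1) r ++ pre (k-1-r) (k-1-r)
  else pre (k-1) (r-k-1) ++ [k+1-(r-k), k+1-(r-k)] ++ pre (k-(r-k)) (k-(r-k))

@[simp] lemma pre_zero (c : ℕ) : pre c 0 = [] := rfl

@[simp] lemma length_pre (c n : ℕ) : (pre c n).length = n := by simp [pre]

lemma pre_succ (c n : ℕ) : pre c (n+1) = pre c n ++ [c - n] := by
  simp [pre, List.range_succ]

lemma pre_succ_cons (c n : ℕ) : pre (c+1) (n+1) = (c+1) :: pre c n := by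
  simp [pre, List.range_succ_eq_map, List.map_map]

lemma map_pred_pre (c n : ℕ) : (pre c n).map (· - 1) = pre (c-1) n := by
  simp only [pre, List.map_map]
  apply List.map_congr_left
  intro t _
  simp
  omega

lemma getElem_pre (c n i : ℕ) (h : i < n) :
    (pre c n)[i]'(by simpa using h) = c - i := by
  simp [pre]

lemma pos_pre (c n : ℕ) (h : n ≤ c) : ∀ x ∈ pre c n, 0 < x := by
  intro x hx
  simp [pre] at hx
  obtain ⟨t, ht, rfl⟩ := hx
  omega

lemma staircase_eq (m : ℕ) : staircase m = pre m m := rfl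

lemma alpha_zero (k : ℕ) : alpha k 0 = pre (k-1) (k-1) := by
  simp [alpha]

lemma dP_nil_right (l : List ℕ) : dP l [] = (l.sum : ℤ) := by
  simp [dP]

lemma dP_nil_left (m : List ℕ) : dP [] m = (m.sum : ℤ) := by
  simp [dP]

lemma dP_cons (a b : ℕ) (l m : List ℕ) :
    dP (a :: l) (b :: m) = (a : ℤ) + (b : ℤ) - 2 * ((min a b : ℕ) : ℤ) + dP l m := by
  simp [dP]
  ring_nf

lemma dP_comm (l m : List ℕ) : dP l m = dP m l := by
  induction l generalizing m with
  | nil => cases m <;> simp [dP_nil_left, dP_nil_right]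
  | cons a l ih =>
    cases m with
    | nil => simp [dP_nil_left, dP_nil_right]
    | cons b m => rw [dP_cons, dP_cons, ih, Nat.min_comm]; ring

lemma dP_append_zero (l m : List ℕ) : dP (l ++ [0]) m = dP l m := by
  induction l generalizing m with
  | nil =>
    cases m with
    | nil => simp [dP_nil_right]
    | cons b m => rw [List.nil_append, dP_nil_left, dP_cons, dP_nil_left]; simp
  | cons a l ih =>
    cases m with
    | nil => simp [dP_nil_right]
    | cons b m => rw [List.cons_append, dP_cons, dP_cons, ih]

lemma dP_append_zeros (l m : List ℕ) (t : ℕ) : dP (l ++ List.replicate t 0) m = dP l m := by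
  induction t generalizing l with
  | zero => simp
  | succ t ih =>
    have : l ++ List.replicate (t+1) 0 = (l ++ [0]) ++ List.replicate t 0 := by
      simp [List.replicate_succ]
    rw [this, ih, dP_append_zero]

lemma sum_map_pred (m : List ℕ) (h : ∀ x ∈ m, 0 < x) :
    (((m.map (· - 1) : List ℕ)).sum : ℤ) = (m.sum : ℤ) - (m.length : ℤ) := by
  induction m with
  | nil => simp
  | cons b m ih =>
    have hb : 0 < b := h b (by simp)
    have := ih (fun x hx => h x (List.mem_cons_of_mem _ hx))
    simp only [List.map_cons, List.sum_cons, List.length_cons]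
    omega

lemma dP_map_pred (l m : List ℕ) (hl : ∀ x ∈ l, 0 < x) (hm : ∀ x ∈ m, 0 < x) :
    dP (l.map (· - 1)) (m.map (· - 1)) = dP l m - ((l.length : ℤ) - m.length).natAbs := by
  induction l generalizing m with
  | nil =>
    rw [List.map_nil, dP_nil_left, dP_nil_left, sum_map_pred m hm]
    simp
  | cons a l ih =>
    cases m with
    | nil =>
      rw [List.map_nil, dP_nil_right, dP_nil_right,
        sum_map_pred (a :: l) hl]
      simp only [List.length_nil]
      omega
    | cons b m =>
      have ha : 0 < a := hl a (by simp)
      have hb : 0 < b := hm b (by simp)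
      rw [List.map_cons, List.map_cons, dP_cons, dP_cons,
        ih m (fun x hx => hl x (List.mem_cons_of_mem _ hx)) (fun x hx => hm x (List.mem_cons_of_mem _ hx))]
      have h1 : min (a-1) (b-1) = min a b - 1 := by omega
      rw [h1]
      have h2 : ((min a b - 1 : ℕ) : ℤ) = (min a b : ℕ) - 1 := by
        have : 1 ≤ min a b := by omega
        omega
      have h3 : ((a - 1 : ℕ) : ℤ) = a - 1 := by omega
      have h4 : ((b - 1 : ℕ) : ℤ) = b - 1 := by omega
      rw [h2, h3, h4]
      simp only [List.length_cons]
      omega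

lemma pos_alpha (k r : ℕ) (hk : 1 ≤ k) (hr : r ≤ 2*k) : ∀ x ∈ alpha k r, 0 < x := by
  intro x hx
  rw [alpha] at hx
  split_ifs at hx with h
  · rcases List.mem_append.1 hx with h1 | h1
    · exact pos_pre _ _ (by omega) x h1
    · exact pos_pre _ _ (by omega) x h1
  · rcases List.mem_append.1 hx with h1 | h1
    · rcases List.mem_append.1 h1 with h2 | h2
      · exact pos_pre _ _ (by omega) x h2
      · simp at h2
        omega
    · exact pos_pre _ _ (by omega) x h1

lemma length_alpha (k r : ℕ) (hk : 1 ≤ k) (hr : r ≤ 2*k) :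
    (alpha k r).length = if r < k then k-1 else if r = k then k else k+1 := by
  rw [alpha]
  split_ifs with h h1 h2 <;> simp [List.length_append] <;> omega

lemma decomp (k r : ℕ) (hk : 1 ≤ k) (hr : r + 1 ≤ 2*k) :
    ∃ T t, alpha k (r+1) = (2*k - (alpha k r).length) :: T ∧
      (alpha k r).map (· - 1) = T ++ List.replicate t 0 := by
  rcases Nat.lt_or_ge r (k-1) with hA | h1
  · -- r ≤ k - 2
    set d := k-2-r with hd
    have e1 : alpha k r = pre (k+1) r ++ pre (d+1) (d+1) := by
      rw [alpha, if_pos (by omega)]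
      have : k-1-r = d+1 := by omega
      rw [this]
    have e2 : alpha k (r+1) = pre (k+1) (r+1) ++ pre d d := by
      rw [alpha, if_pos (by omega)]
      have : k-1-(r+1) = d := by omega
      rw [this]
    have hlen : (alpha k r).length = k-1 := by
      rw [e1]; simp; omega
    refine ⟨pre k r ++ pre d d, 1, ?_, ?_⟩
    · rw [e2, hlen, pre_succ_cons]
      have : 2*k - (k-1) = k+1 := by omega
      rw [this, List.cons_append]
    · rw [e1]
      simp only [List.map_append, map_pred_pre, Nat.add_sub_cancel]
      rw [pre_succ]
      simp [List.append_assoc]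
  rcases Nat.lt_or_ge r k with hB | h2
  · -- r = k-1
    have hr' : r = k-1 := by omega
    have hk1 : k = (k-1)+1 := by omega
    have e1 : alpha k r = pre (k+1) (k-1) := by
      rw [alpha, if_pos (by omega), hr']
      have : k-1-(k-1) = 0 := by omega
      rw [this]
      simp
    have e2 : alpha k (r+1) = pre (k+1) k := by
      have : r+1 = k := by omega
      rw [alpha, this, if_pos (le_refl k)]
      have h0 : k-1-k = 0 := by omega
      rw [h0]
      simp
    have hlen : (alpha k r).length = k-1 := by rw [e1]; simp
    refine ⟨pre k (k-1), 0, ?_, ?_⟩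
    · rw [e2, hlen]
      have : 2*k - (k-1) = k+1 := by omega
      rw [this]
      conv_lhs => rw [hk1]
      rw [pre_succ_cons, show k-1+1+1 = k+1 by omega, show k-1+1 = k by omega]
    · rw [e1, map_pred_pre, Nat.add_sub_cancel]
      simp
  rcases Nat.eq_or_lt_of_le h2 with hC | h3
  · -- r = k
    subst hC
    have hk1 : k = (k-1)+1 := by omega
    have e1 : alpha k k = pre (k+1) k := by
      rw [alpha, if_pos (le_refl k)]
      rw [show k-1-k = 0 by omega]
      simp
    have e2 : alpha k (k+1) = [k, k] ++ pre (k-1) (k-1) := by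
      rw [alpha, if_neg (by omega)]
      rw [show k+1-k-1 = 0 by omega, show k+1-(k+1-k) = k by omega,
        show k-(k+1-k) = k-1 by omega]
      simp
    have hlen : (alpha k k).length = k := by rw [e1]; simp
    refine ⟨k :: pre (k-1) (k-1), 0, ?_, ?_⟩
    · rw [e2, hlen]
      rw [show 2*k - k = k by omega]
      simp
    · rw [e1, map_pred_pre, Nat.add_sub_cancel]
      conv_lhs => rw [hk1, pre_succ_cons]
      simp [show k-1+1 = k by omega]
  · -- k+1 ≤ r ≤ 2k-1
    have hk2 : 2 ≤ k := by omega
    set m1 := r-k-1 with hm1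
    set e := k-(r-k)-1 with he
    have e1 : alpha k r = pre (k-1) m1 ++ [e+2, e+2] ++ pre (e+1) (e+1) := by
      rw [alpha, if_neg (by omega)]
      rw [show k+1-(r-k) = e+2 by omega, show k-(r-k) = e+1 by omega]
    have e2 : alpha k (r+1) = pre (k-1) (m1+1) ++ [e+1, e+1] ++ pre e e := by
      rw [alpha, if_neg (by omega)]
      rw [show r+1-k-1 = m1+1 by omega, show k+1-(r+1-k) = e+1 by omega,
        show k-(r+1-k) = e by omega]
    have hlen : (alpha k r).length = k+1 := by
      rw [e1]; simp; omega
    refine ⟨pre (k-2) m1 ++ [e+1, e+1] ++ pre e e, 1, ?_, ?_⟩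
    · rw [e2, hlen]
      have h5 : 2*k - (k+1) = k-1 := by omega
      rw [h5, show k-1 = (k-2)+1 by omega, pre_succ_cons]
      simp
    · rw [e1]
      simp only [List.map_append, map_pred_pre]
      simp [pre_succ, List.append_assoc, show k-1-1 = k-2 by omega, show e+1-1 = e by omega,
        show e+2-1 = e+1 by omega]

lemma tau_step (k r : ℕ) (hk : 1 ≤ k) (hr : r + 1 ≤ 2*k) :
    tauP (2*k+1) (alpha k r) = alpha k (r+1) := by
  obtain ⟨T, t, h1, h2⟩ := decomp k r hk hr
  have hL : (alpha k r).length < 2*k := by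
    have := length_alpha k r hk (by omega)
    split_ifs at this <;> omega
  have hTpos : ∀ x ∈ T, 0 < x := by
    intro x hx
    exact pos_alpha k (r+1) hk (by omega) x (by rw [h1]; exact List.mem_cons_of_mem _ hx)
  rw [tauP, h2]
  rw [show 2*k+1 - (alpha k r).length - 1 = 2*k - (alpha k r).length by omega]
  rw [List.filter_cons_of_pos (by simp; omega), List.filter_append]
  rw [List.filter_eq_self.2 (fun a ha => by simpa using hTpos a ha)]
  have : (List.replicate t 0).filter (fun x => decide (0 < x)) = [] := by
    simp
  rw [this, List.append_nil, h1]

lemma key (k r s : ℕ) (hk : 1 ≤ k) (hr : r + 1 ≤ 2*k) (hs : s + 1 ≤ 2*k) :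
    dP (alpha k (r+1)) (alpha k (s+1)) = dP (alpha k r) (alpha k s) := by
  obtain ⟨T, t, h1, h2⟩ := decomp k r hk hr
  obtain ⟨S, u, g1, g2⟩ := decomp k s hk hs
  have hTS : dP T S = dP ((alpha k r).map (· - 1)) ((alpha k s).map (· - 1)) := by
    rw [h2, g2, dP_append_zeros, dP_comm T (S ++ List.replicate u 0), dP_append_zeros, dP_comm S T]
  rw [h1, g1, dP_cons, hTS,
    dP_map_pred _ _ (pos_alpha k r hk (by omega)) (pos_alpha k s hk (by omega))]
  have hLr := length_alpha k r hk (by omega)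
  have hLs := length_alpha k s hk (by omega)
  split_ifs at hLr hLs <;> omega

lemma sum_alpha (k r : ℕ) (hk : 1 ≤ k) (hr : r ≤ 2*k) :
    ((alpha k r).sum : ℤ) = ((alpha k 0).sum : ℤ) + 2 * min (r : ℤ) (2*k+1-(r:ℤ)) := by
  induction r with
  | zero => simp; omega
  | succ r ih =>
    obtain ⟨T, t, h1, h2⟩ := decomp k r hk (by omega)
    have hTsum : (T.sum : ℤ) = ((alpha k r).sum : ℤ) - (alpha k r).length := by
      have hs := sum_map_pred (alpha k r) (pos_alpha k r hk (by omega))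
      rw [h2] at hs
      simpa using hs
    have hsum : ((alpha k (r+1)).sum : ℤ)
        = (2*k - (alpha k r).length : ℕ) + (T.sum : ℤ) := by
      rw [h1]
      push_cast [List.sum_cons]
      ring
    have hLr := length_alpha k r hk (by omega)
    have := ih (by omega)
    split_ifs at hLr <;> omega

lemma alpha_getElem_ge (k r n : ℕ) (hk : 1 ≤ k) (hr : r ≤ 2*k) (hn : n < k-1)
    (h : n < (alpha k r).length) : k-1-n ≤ (alpha k r)[n] := by
  by_cases hc : r ≤ k
  · have e1 : alpha k r = pre (k+1) r ++ pre (k-1-r) (k-1-r) := by rw [alpha, if_pos hc]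
    simp only [e1, List.length_append, length_pre] at h
    simp only [e1, List.getElem_append, pre, List.getElem_map, List.getElem_range,
      List.length_map, List.length_range]
    split_ifs with h' <;> omega
  · have e1 : alpha k r = pre (k-1) (r-k-1) ++ [k+1-(r-k), k+1-(r-k)]
        ++ pre (k-(r-k)) (k-(r-k)) := by rw [alpha, if_neg hc]
    simp only [e1, List.length_append, length_pre, List.length_cons, List.length_nil] at h
    simp only [e1, List.getElem_append, pre, List.getElem_map, List.getElem_range,
      List.length_map, List.length_range, List.length_append, List.length_cons,
      List.length_nil]
    split_ifs with h' h''
    · omega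
    · have h2 : n - (r-k-1) = 0 ∨ n - (r-k-1) = 1 := by omega
      rcases h2 with h2 | h2 <;> simp [h2] <;> omega
    · omega

lemma zip_alpha (k r : ℕ) (hk : 1 ≤ k) (hr : r ≤ 2*k) :
    (alpha k 0).zipWith min (alpha k r) = alpha k 0 := by
  have hlen0 : (alpha k 0).length = k-1 := by rw [alpha_zero]; simp
  have hlenr : k-1 ≤ (alpha k r).length := by
    have := length_alpha k r hk hr
    split_ifs at this <;> omega
  apply List.ext_getElem
  · simp [List.length_zipWith]
    omega
  · intro n h1 h2
    rw [List.getElem_zipWith]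
    have hn : n < k-1 := by rwa [hlen0] at h2
    have hval : (alpha k 0)[n]'h2 = k-1-n := by
      simp only [alpha_zero, pre, List.getElem_map, List.getElem_range]
    rw [hval]
    have := alpha_getElem_ge k r n hk hr hn (by omega)
    omega

lemma dist0 (k r : ℕ) (hk : 1 ≤ k) (hr : r ≤ 2*k) :
    dP (alpha k 0) (alpha k r) = 2 * min (r : ℤ) (2*k+1-(r:ℤ)) := by
  rw [dP, zip_alpha k r hk hr, sum_alpha k r hk hr]
  ring

lemma orbit (k r : ℕ) (hk : 1 ≤ k) (hr : r ≤ 2*k) :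
    (tauP (2*k+1))^[r] (staircase (k-1)) = alpha k r := by
  induction r with
  | zero => simp [staircase_eq, alpha_zero]
  | succ r ih =>
    rw [Function.iterate_succ_apply', ih (by omega), tau_step k r hk (by omega)]

lemma shift (k : ℕ) (hk : 1 ≤ k) :
    ∀ i j, i ≤ j → j ≤ 2*k → dP (alpha k i) (alpha k j) = dP (alpha k 0) (alpha k (j-i)) := by
  intro i
  induction i with
  | zero => intro j _ _; simp
  | succ i ih =>
    intro j hij hj
    obtain ⟨j', rfl⟩ : ∃ j', j = j'+1 := ⟨j-1, by omega⟩
    rw [key k i j' hk (by omega) (by omega), ih j' (by omega) (by omega),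
      show j'+1-(i+1) = j'-i by omega]

theorem odd_cycle_metric (k : ℕ) (hk : 1 ≤ k) (i j : ℕ)
    (hi : i ≤ 2 * k) (hj : j ≤ 2 * k) :
    dP ((tauP (2 * k + 1))^[i] (staircase (k - 1)))
       ((tauP (2 * k + 1))^[j] (staircase (k - 1)))
      = 2 * min (((j : ℤ) - i).natAbs : ℤ)
          ((2 * k + 1 : ℤ) - (((j : ℤ) - i).natAbs : ℤ)) := by
  rcases le_total i j with h | h
  · rw [orbit k i hk hi, orbit k j hk hj, shift k hk i j h hj,
      dist0 k (j-i) hk (by omega)]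
    omega
  · rw [orbit k i hk hi, orbit k j hk hj, dP_comm, shift k hk j i h hi,
      dist0 k (i-j) hk (by omega)]
    omega
end

section
/- Let N = 2k and α_0 = (k-1, k-2, …, 2, 1). Then for all i, j ∈ {0,…,N-1}, the partitions α_i = τ^i(α_0) satisfy d(α_i, α_j) = min(|j-i|, N-|j-i|); that is, the orbit of the staircase under τ is an N-cycle with edge length 1. -/
/-- Entry of the `j`-th iterate at position `p`. -/
def gg (k j p : ℕ) : ℕ :=
  if j ≤ k then (if p < j then k - p else k - 1 - p)
  else (if p < j - k then k - 1 - p else k - p)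

/-- Length of the `j`-th iterate. -/
def LL (k j : ℕ) : ℕ := if j < k then k - 1 else k

lemma filter_range (q : ℕ → Bool) :
    ∀ n m, m ≤ n → (∀ p, p < n → q p = decide (p < m)) →
    (List.range n).filter q = List.range m := by
  intro n
  induction n with
  | zero =>
    intro m hm _
    obtain rfl : m = 0 := Nat.le_zero.mp hm
    simp
  | succ n ih =>
    intro m hm h
    rcases eq_or_lt_of_le hm with rfl | hlt
    · have hall : ∀ p ∈ List.range (n + 1), q p := by
        intro p hp
        rw [List.mem_range] at hp
        rw [h p hp]
        simpa using hp
      exact List.filter_eq_self.mpr hall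
    · have hmn : m ≤ n := by omega
      rw [List.range_succ, List.filter_append, ih m hmn (fun p hp => h p (by omega))]
      have hq : q n = false := by
        rw [h n (by omega)]
        simp
        omega
      simp [hq]

lemma zip_min_map_range (f g : ℕ → ℕ) (n m : ℕ) :
    List.zipWith min ((List.range n).map f) ((List.range m).map g)
      = (List.range (min n m)).map (fun p => min (f p) (g p)) := by
  apply List.ext_getElem
  · simp
  · intro i h1 h2
    simp [List.getElem_zipWith]

lemma sum_map_split (f a b : ℕ → ℕ) :
    ∀ n, (∀ p, p < n → f p = a p + b p) →
    ((List.range n).map f).sum = ((List.range n).map a).sum + ((List.range n).map b).sum := by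
  intro n
  induction n with
  | zero => intro _; simp
  | succ n ih =>
    intro h
    rw [List.range_succ]
    simp only [List.map_append, List.sum_append, List.map_cons, List.map_nil,
      List.sum_cons, List.sum_nil]
    rw [ih (fun p hp => h p (by omega)), h n (Nat.lt_succ_self n)]
    omega

lemma sum_map_ite (c d : ℕ) :
    ∀ n, ((List.range n).map (fun p => if c ≤ p ∧ p < d then 1 else 0)).sum
      = min d n - min c n := by
  intro n
  induction n with
  | zero => simp
  | succ n ih =>
    rw [List.range_succ]
    simp only [List.map_append, List.sum_append, List.map_cons, List.map_nil,
      List.sum_cons, List.sum_nil, ih]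
    split_ifs with hcd <;> omega

def Ek (k : ℕ) : ℕ := ((List.range k).map (fun p => k - 1 - p)).sum

lemma base_eq (k n : ℕ) (hk : 1 ≤ k) (h : n = k - 1 ∨ n = k) :
    ((List.range n).map (fun p => k - 1 - p)).sum = Ek k := by
  rcases h with rfl | rfl
  · unfold Ek
    have hk' : k = (k - 1) + 1 := by omega
    rw [hk', List.range_succ]
    simp
  · rfl

/-- Workhorse: sum of a list whose entries are `k-1-p` plus an interval indicator. -/
lemma sum_min (k : ℕ) (F : ℕ → ℕ) (n c d : ℕ) (hk : 1 ≤ k) (hn : n = k - 1 ∨ n = k)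
    (hF : ∀ p, p < n → F p = (k - 1 - p) + (if c ≤ p ∧ p < d then 1 else 0)) :
    ((List.range n).map F).sum = Ek k + (min d n - min c n) := by
  rw [sum_map_split F (fun p => k - 1 - p) (fun p => if c ≤ p ∧ p < d then 1 else 0) n hF,
    sum_map_ite, base_eq k n hk hn]

lemma iterate_eq (k : ℕ) (hk : 1 ≤ k) :
    ∀ j, j ≤ 2 * k - 1 →
    (tauP (2 * k))^[j] (staircase (k - 1)) = (List.range (LL k j)).map (gg k j) := by
  intro j
  induction j with
  | zero =>
    intro _
    simp only [Function.iterate_zero, id_eq, staircase]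
    have hL : LL k 0 = k - 1 := by unfold LL; split_ifs <;> omega
    rw [hL]
    apply List.map_congr_left
    intro p hp
    simp only [gg]
    split_ifs <;> omega
  | succ j ih =>
    intro hj
    rw [Function.iterate_succ_apply', ih (by omega)]
    obtain ⟨hLj1, hLj2⟩ : ((j < k ∧ LL k j = k - 1) ∨ (k ≤ j ∧ LL k j = k)) ∧
        ((j + 1 < k ∧ LL k (j+1) = k - 1) ∨ (k ≤ j + 1 ∧ LL k (j+1) = k)) := by
      constructor <;> (unfold LL; split_ifs <;> omega)
    unfold tauP
    rw [List.length_map, List.length_range, List.map_map, List.filter_cons,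
      if_pos (by simp only [decide_eq_true_eq]; omega)]
    rw [List.filter_map]
    rw [filter_range _ (LL k j) (LL k (j+1) - 1) (by omega)
      (by
        intro p hp
        simp only [Function.comp_apply, gg]
        split_ifs <;> simp only [decide_eq_decide] <;> omega)]
    have hsucc : LL k (j + 1) = (LL k (j + 1) - 1) + 1 := by omega
    conv_rhs => rw [hsucc, List.range_succ_eq_map, List.map_cons, List.map_map]
    congr 1
    · simp only [gg]
      split_ifs <;> omega
    · apply List.map_congr_left
      intro p hp
      simp only [List.mem_range] at hp
      simp only [Function.comp_apply, gg, Nat.succ_eq_add_one]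
      split_ifs <;> omega

lemma aux (k i j : ℕ) (hk : 1 ≤ k) (hij : i ≤ j) (hjk : j < 2 * k) :
    dP ((tauP (2 * k))^[i] (staircase (k - 1))) ((tauP (2 * k))^[j] (staircase (k - 1)))
      = min ((j : ℤ) - i) (2 * k - ((j : ℤ) - i)) := by
  rw [iterate_eq k hk i (by omega), iterate_eq k hk j (by omega)]
  unfold dP
  rw [zip_min_map_range]
  have hLi : (i < k ∧ LL k i = k - 1) ∨ (k ≤ i ∧ LL k i = k) := by
    unfold LL; split_ifs <;> omega
  have hLj : (j < k ∧ LL k j = k - 1) ∨ (k ≤ j ∧ LL k j = k) := by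
    unfold LL; split_ifs <;> omega
  rcases le_or_gt j k with hc1 | hc1
  · -- case 1 : i ≤ j ≤ k
    rw [sum_min k (gg k i) (LL k i) 0 i hk (by omega)
        (by intro p hp; simp only [gg]; split_ifs <;> omega),
      sum_min k (gg k j) (LL k j) 0 j hk (by omega)
        (by intro p hp; simp only [gg]; split_ifs <;> omega),
      sum_min k (fun p => min (gg k i p) (gg k j p)) (min (LL k i) (LL k j)) 0 i hk (by omega)
        (by intro p hp; simp only [gg]; split_ifs <;> omega)]
    omega
  · rcases le_or_gt k i with hc2 | hc2
    · -- case 2 : k ≤ i ≤ j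
      rw [sum_min k (gg k i) (LL k i) (i - k) k hk (by omega)
          (by intro p hp; simp only [gg]; split_ifs <;> omega),
        sum_min k (gg k j) (LL k j) (j - k) k hk (by omega)
          (by intro p hp; simp only [gg]; split_ifs <;> omega),
        sum_min k (fun p => min (gg k i p) (gg k j p)) (min (LL k i) (LL k j)) (j - k) k hk
          (by omega)
          (by intro p hp; simp only [gg]; split_ifs <;> omega)]
      omega
    · -- case 3 : i < k < j
      rw [sum_min k (gg k i) (LL k i) 0 i hk (by omega)
          (by intro p hp; simp only [gg]; split_ifs <;> omega),
        sum_min k (gg k j) (LL k j) (j - k) k hk (by omega)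
          (by intro p hp; simp only [gg]; split_ifs <;> omega),
        sum_min k (fun p => min (gg k i p) (gg k j p)) (min (LL k i) (LL k j)) (j - k) i hk
          (by omega)
          (by intro p hp; simp only [gg]; split_ifs <;> omega)]
      omega

theorem even_cycle_metric (k : ℕ) (hk : 1 ≤ k) (i j : ℕ)
    (hi : i < 2 * k) (hj : j < 2 * k) :
    dP ((tauP (2 * k))^[i] (staircase (k - 1)))
       ((tauP (2 * k))^[j] (staircase (k - 1)))
      = min (((j : ℤ) - i).natAbs : ℤ)
          ((2 * k : ℤ) - (((j : ℤ) - i).natAbs : ℤ)) := by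
  rcases le_total i j with hij | hij
  · rw [aux k i j hk hij hj]
    omega
  · rw [dP_comm, aux k j i hk hij hi]
    omega
end

section
/- Let S = [[1,1,0],[t,t,1],[t,t,t]] over ℤ[t]. For n ≥ 1, S^n = a_n·S + b_n·(S² - (1+t)·S), where a_n = Σ_{j=0}^{n-1} C(2(n-1)-j, j)·t^j and b_n = Σ_{j=0}^{n-2} C(2(n-1)-j-1, j)·t^j. -/
open Polynomial

noncomputable def Smat : Matrix (Fin 3) (Fin 3) (Polynomial ℤ) :=
  !![1, 1, 0; X, X, 1; X, X, X]

/-- a_n = Σ_{j=0}^{n-1} C(2(n-1)-j, j) t^j. -/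
noncomputable def aP (n : ℕ) : Polynomial ℤ :=
  ∑ j ∈ Finset.range n, (C ((2 * (n - 1) - j).choose j : ℤ)) * X ^ j

/-- b_n = Σ_{j=0}^{n-2} C(2(n-1)-j-1, j) t^j. -/
noncomputable def bP (n : ℕ) : Polynomial ℤ :=
  ∑ j ∈ Finset.range (n - 1), (C ((2 * (n - 1) - j - 1).choose j : ℤ)) * X ^ j

lemma pascalZ (a b : ℕ) (h : 1 ≤ a) :
    (a.choose (b + 1) : ℤ) = (a - 1).choose b + (a - 1).choose (b + 1) := by
  obtain ⟨c, rfl⟩ : ∃ c, a = c + 1 := ⟨a - 1, by omega⟩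
  rw [Nat.choose_succ_succ]
  push_cast
  simp

lemma aP_coeff (m k : ℕ) :
    (aP (m + 1)).coeff k = if k < m + 1 then ((2 * m - k).choose k : ℤ) else 0 := by
  simp [aP, Polynomial.finset_sum_coeff, Polynomial.coeff_C_mul, Polynomial.coeff_X_pow,
    mul_ite, mul_one, mul_zero, Finset.sum_ite_eq, Finset.mem_range]

lemma bP_coeff (m k : ℕ) :
    (bP (m + 1)).coeff k = if k < m then ((2 * m - k - 1).choose k : ℤ) else 0 := by
  simp [bP, Polynomial.finset_sum_coeff, Polynomial.coeff_C_mul, Polynomial.coeff_X_pow,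
    mul_ite, mul_one, mul_zero, Finset.sum_ite_eq, Finset.mem_range]

lemma bP_rec (m : ℕ) : bP (m + 2) = aP (m + 1) + X * bP (m + 1) := by
  ext k
  cases k with
  | zero => simp [bP_coeff, aP_coeff]
  | succ j =>
      rw [Polynomial.coeff_add, Polynomial.coeff_X_mul]
      rw [show m + 2 = (m + 1) + 1 from rfl, bP_coeff, aP_coeff, bP_coeff]
      split_ifs with h1 h2' h3 h3' <;> try omega
      · -- j < m
        rw [show 2 * (m + 1) - (j + 1) - 1 = 2 * m - j from by omega,
          pascalZ _ _ (by omega),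
          show 2 * m - (j + 1) = 2 * m - j - 1 from by omega]
        ring

lemma aP_rec (m : ℕ) : aP (m + 2) = (1 + X) * aP (m + 1) + X * bP (m + 1) := by
  ext k
  rw [add_mul, one_mul, add_assoc, Polynomial.coeff_add]
  cases k with
  | zero =>
      rw [show m + 2 = (m + 1) + 1 from rfl, aP_coeff, aP_coeff]
      simp
  | succ j =>
      rw [Polynomial.coeff_add, Polynomial.coeff_X_mul, Polynomial.coeff_X_mul]
      rw [show m + 2 = (m + 1) + 1 from rfl, aP_coeff, aP_coeff, aP_coeff, bP_coeff]
      split_ifs with h1 h2' h3 h4 <;> try omega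
      · -- j < m
        rw [show 2 * (m + 1) - (j + 1) = (2 * m - j) + 1 from by omega]
        rw [pascalZ _ _ (by omega)]
        rw [show (2 * m - j) + 1 - 1 = 2 * m - j from by omega]
        rw [pascalZ (2 * m - j) j (by omega)]
        rw [show 2 * m - (j + 1) = 2 * m - j - 1 from by omega]
        ring
      · -- j = m
        have hj : j = m := by omega
        rw [hj, show 2 * (m + 1) - (m + 1) = m + 1 from by omega,
          show 2 * m - m = m from by omega]
        simp [Nat.choose_self]

lemma Smat_cube : Smat ^ 3 = ((1 + 2 * X : Polynomial ℤ)) • Smat ^ 2 - (X ^ 2 : Polynomial ℤ) • Smat := by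
  apply Matrix.ext
  intro i j
  fin_cases i <;> fin_cases j <;>
    simp [Smat, pow_succ, Matrix.mul_apply, Fin.sum_univ_three, Matrix.vecHead, Matrix.vecTail] <;> ring

lemma E_mul_S :
    (Smat ^ 2 - ((1 + X : Polynomial ℤ)) • Smat) * Smat =
      (X : Polynomial ℤ) • (Smat ^ 2 - ((1 + X : Polynomial ℤ)) • Smat) + (X : Polynomial ℤ) • Smat := by
  rw [sub_mul, smul_mul_assoc, show Smat ^ 2 * Smat = Smat ^ 3 from (pow_succ Smat 2).symm,
    show Smat * Smat = Smat ^ 2 from (sq Smat).symm, Smat_cube]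
  module

theorem Smat_pow (n : ℕ) (hn : 1 ≤ n) :
    Smat ^ n = aP n • Smat + bP n • (Smat ^ 2 - ((1 + X : Polynomial ℤ)) • Smat) := by
  induction n, hn using Nat.le_induction with
  | base => simp [aP, bP]
  | succ n hn ih =>
      obtain ⟨m, rfl⟩ : ∃ m, n = m + 1 := ⟨n - 1, by omega⟩
      rw [pow_succ, ih, add_mul, smul_mul_assoc, smul_mul_assoc, E_mul_S,
        show Smat * Smat = Smat ^ 2 from (sq Smat).symm,
        aP_rec, bP_rec]
      module
end

section
/- For integers k ≥ 1 and 2 ≤ s ≤ k, the binomial identity C(2(k+1)-s, s) - C(2(k-1)-(s-2), s-2) = (2k+1)/(2k+1-s) · C(2k+1-s, s) holds; equivalently, (2k+1-s)·(C(2k+2-s, s) - C(2k-s, s-2)) = (2k+1)·C(2k+1-s, s). -/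
theorem binom_identity (k s : ℕ) (hk : 1 ≤ k) (hs : 2 ≤ s) (hsk : s ≤ k) :
    ((2 * k + 1 - s : ℕ) : ℤ) *
        (((2 * k + 2 - s).choose s : ℤ) - ((2 * k - s).choose (s - 2) : ℤ))
      = (2 * k + 1 : ℤ) * ((2 * k + 1 - s).choose s : ℤ) := by
  obtain ⟨t, rfl⟩ : ∃ t, s = t + 2 := ⟨s - 2, by omega⟩
  obtain ⟨m, rfl⟩ : ∃ m, k = t + 2 + m := ⟨k - (t + 2), by omega⟩
  have e1 : 2 * (t + 2 + m) + 1 - (t + 2) = t + 2 * m + 3 := by omega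
  have e2 : 2 * (t + 2 + m) + 2 - (t + 2) = t + 2 * m + 4 := by omega
  have e3 : 2 * (t + 2 + m) - (t + 2) = t + 2 * m + 2 := by omega
  have e4 : t + 2 - 2 = t := by omega
  rw [e1, e2, e3, e4]
  have h4 : (t + 2 * m + 4).choose (t + 2)
      = (t + 2 * m + 3).choose (t + 1) + (t + 2 * m + 3).choose (t + 2) := by
    have := Nat.choose_succ_succ (t + 2 * m + 3) (t + 1)
    simpa using this
  have h5 : (t + 2 * m + 3).choose (t + 1)
      = (t + 2 * m + 2).choose t + (t + 2 * m + 2).choose (t + 1) := by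
    have := Nat.choose_succ_succ (t + 2 * m + 2) t
    simpa using this
  have h6 : (t + 2 * m + 3) * (t + 2 * m + 2).choose (t + 1)
      = (t + 2 * m + 3).choose (t + 2) * (t + 2) := by
    have := Nat.add_one_mul_choose_eq (t + 2 * m + 2) (t + 1)
    simpa using this
  have h4' := congrArg (Nat.cast : ℕ → ℤ) h4
  have h5' := congrArg (Nat.cast : ℕ → ℤ) h5
  have h6' := congrArg (Nat.cast : ℕ → ℤ) h6
  push_cast at h4' h5' h6' ⊢
  linear_combination ((t : ℤ) + 2 * m + 3) * h4' + ((t : ℤ) + 2 * m + 3) * h5' + h6'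
end

section
/- Let S = [[1,1,0],[t,t,1],[t,t,t]] over ℚ(t) and q a formal variable. Then the generating function of traces satisfies Σ_{k≥0} tr(S^k)·q^k = (3 - (2+4t)q + t²q²)/(1 - (1+2t)q + t²q²) as formal power series in q over ℚ(t). -/
open Polynomial

lemma Ssq : Smat ^ 2 =
    !![1+X, 1+X, 1; 2*X+X^2, 2*X+X^2, 2*X; X+2*X^2, X+2*X^2, X+X^2] := by
  rw [pow_two, Smat, Matrix.mul_fin_three]; norm_num; ring_nf; simp only [and_self]

lemma Scube : Smat ^ 3 =
    !![1+3*X+X^2, 1+3*X+X^2, 1+2*X; 2*X+5*X^2+X^3, 2*X+5*X^2+X^3, 2*X+3*X^2;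
       X+4*X^2+3*X^3, X+4*X^2+3*X^3, X+3*X^2+X^3] := by
  rw [pow_succ, Ssq, Smat, Matrix.mul_fin_three]; norm_num; ring_nf; simp only [and_self]

lemma cube_rel : Smat ^ 3 + (X^2 : Polynomial ℤ) • Smat
    = ((1 + 2*X) : Polynomial ℤ) • Smat ^ 2 := by
  rw [Scube, Ssq, Smat]
  refine Matrix.ext fun i j => ?_
  fin_cases i <;> fin_cases j <;>
    simp [Matrix.smul_apply, smul_eq_mul, Matrix.vecHead, Matrix.vecTail] <;> ring

lemma pow_rel (n : ℕ) : Smat ^ (n + 3) + (X^2 : Polynomial ℤ) • Smat ^ (n + 1)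
    = ((1 + 2*X) : Polynomial ℤ) • Smat ^ (n + 2) := by
  have h := congrArg (· * Smat ^ n) cube_rel
  simp only [add_mul, Matrix.smul_mul, ← pow_add] at h
  rw [show n + 3 = 3 + n by omega, show n + 1 = 1 + n by omega, show n + 2 = 2 + n by omega]
  simpa [pow_add] using h

lemma tr_rel (n : ℕ) : Matrix.trace (Smat ^ (n + 3))
    = (1 + 2*X) * Matrix.trace (Smat ^ (n + 2)) - X^2 * Matrix.trace (Smat ^ (n + 1)) := by
  have h := congrArg Matrix.trace (pow_rel n)
  simp only [Matrix.trace_add, Matrix.trace_smul, smul_eq_mul] at h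
  linear_combination h

lemma tr0 : Matrix.trace (Smat ^ 0) = 3 := by
  simp [Matrix.trace_one]

lemma tr1 : Matrix.trace Smat = 1 + 2*X := by
  rw [Smat]; simp [Matrix.trace_fin_three]; ring

lemma tr2 : Matrix.trace (Smat ^ 2) = 1 + 4*X + 2*X^2 := by
  rw [Ssq]; simp [Matrix.trace_fin_three]; ring

/-- Σ_{k≥0} tr(S^k) q^k = (3 - (2+4t)q + t²q²)/(1 - (1+2t)q + t²q²), stated with the
denominator (a unit in the power series ring) cleared. -/
theorem trace_generating_series :
    (PowerSeries.mk fun n => Matrix.trace (Smat ^ n)) *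
        (1 - (PowerSeries.C : Polynomial ℤ →+* PowerSeries (Polynomial ℤ)) (1 + 2 * X) * PowerSeries.X
           + (PowerSeries.C : Polynomial ℤ →+* PowerSeries (Polynomial ℤ)) (X ^ 2) * PowerSeries.X ^ 2)
      = 3 - (PowerSeries.C : Polynomial ℤ →+* PowerSeries (Polynomial ℤ)) (2 + 4 * X) * PowerSeries.X
          + (PowerSeries.C : Polynomial ℤ →+* PowerSeries (Polynomial ℤ)) (X ^ 2) * PowerSeries.X ^ 2 := by
  set f : PowerSeries (Polynomial ℤ) := PowerSeries.mk fun n => Matrix.trace (Smat ^ n) with hf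
  have hring : f * (1 - (PowerSeries.C : Polynomial ℤ →+* PowerSeries (Polynomial ℤ)) (1 + 2 * X) * PowerSeries.X
           + (PowerSeries.C : Polynomial ℤ →+* PowerSeries (Polynomial ℤ)) (X ^ 2) * PowerSeries.X ^ 2)
      = f - (PowerSeries.C : Polynomial ℤ →+* PowerSeries (Polynomial ℤ)) (1 + 2 * X) * (f * PowerSeries.X)
        + (PowerSeries.C : Polynomial ℤ →+* PowerSeries (Polynomial ℤ)) (X ^ 2) * ((f * PowerSeries.X) * PowerSeries.X) := by
    ring
  have h3 : (3 : PowerSeries (Polynomial ℤ)) = (PowerSeries.C : Polynomial ℤ →+* PowerSeries (Polynomial ℤ)) 3 :=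
    (map_ofNat ((PowerSeries.C : Polynomial ℤ →+* PowerSeries (Polynomial ℤ))) 3).symm
  refine PowerSeries.ext fun n => ?_
  rw [hring, LinearMap.map_add, LinearMap.map_sub, LinearMap.map_add, LinearMap.map_sub,
    PowerSeries.coeff_C_mul, PowerSeries.coeff_C_mul, h3,
    show ((PowerSeries.C : Polynomial ℤ →+* PowerSeries (Polynomial ℤ)) (X^2) * PowerSeries.X ^ 2 : PowerSeries (Polynomial ℤ))
      = (PowerSeries.C : Polynomial ℤ →+* PowerSeries (Polynomial ℤ)) (X^2) * PowerSeries.X ^ 2 from rfl]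
  rw [show ((PowerSeries.C : Polynomial ℤ →+* PowerSeries (Polynomial ℤ)) (2 + 4*X) * PowerSeries.X : PowerSeries (Polynomial ℤ))
      = (PowerSeries.C : Polynomial ℤ →+* PowerSeries (Polynomial ℤ)) (2 + 4*X) * PowerSeries.X ^ 1 by rw [pow_one],
    PowerSeries.coeff_C_mul_X_pow, PowerSeries.coeff_C_mul_X_pow, PowerSeries.coeff_C]
  rcases n with _ | _ | _ | n
  · simp [hf, PowerSeries.coeff_zero_mul_X, tr0]
  · simp [hf, PowerSeries.coeff_succ_mul_X, PowerSeries.coeff_zero_mul_X, tr0, tr1]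
    ring
  · simp [hf, PowerSeries.coeff_succ_mul_X, tr0, tr1, tr2]
    ring
  · have hr := tr_rel n
    simp [hf, PowerSeries.coeff_succ_mul_X, Nat.succ_ne_zero]
    linear_combination hr
end

section
/- For odd N = 2k+1 ≥ 3, substituting t = 1 gives Σ_{s=0}^{k} (N/(N-s))·C(N-s, s)·2^s = 2^N - 1; that is, the total number of nonempty faces of the injective hull of the N-cycle is 2^N - 1. -/
/-- `S n = Σ_{s=0}^{n} C(n-s,s) 2^s`, a Jacobsthal-type sum. -/
def Sjac (n : ℕ) : ℕ := ∑ s ∈ Finset.range (n + 1), (n - s).choose s * 2 ^ s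

lemma Sjac_zero : Sjac 0 = 1 := by decide

lemma Sjac_one : Sjac 1 = 1 := by decide

lemma Sjac_rec (n : ℕ) : Sjac (n + 2) = Sjac (n + 1) + 2 * Sjac n := by
  have h1 : Sjac (n + 2) = ∑ s ∈ Finset.range (n + 2), (n + 2 - s).choose s * 2 ^ s := by
    rw [Sjac, Finset.sum_range_succ]
    simp
  rw [h1, Finset.sum_range_succ']
  have h2 : ∀ t ∈ Finset.range (n + 1),
      (n + 2 - (t + 1)).choose (t + 1) * 2 ^ (t + 1)
      = (n - t).choose (t + 1) * 2 ^ (t + 1) + (n - t).choose t * 2 ^ (t + 1) := by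
    intro t ht
    have ht' : t ≤ n := by simpa [Nat.lt_succ_iff] using ht
    have : n + 2 - (t + 1) = (n - t) + 1 := by omega
    rw [this, Nat.choose_succ_succ']
    ring
  rw [Finset.sum_congr rfl h2, Finset.sum_add_distrib]
  have h3 : Sjac (n + 1) = ∑ t ∈ Finset.range (n + 1),
      (n - t).choose (t + 1) * 2 ^ (t + 1) + (n + 1 - 0).choose 0 * 2 ^ 0 := by
    rw [Sjac, Finset.sum_range_succ']
    congr 1
    apply Finset.sum_congr rfl
    intro t ht
    have ht' : t ≤ n := by simpa [Nat.lt_succ_iff] using ht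
    congr 2
    omega
  have h4 : 2 * Sjac n = ∑ t ∈ Finset.range (n + 1), (n - t).choose t * 2 ^ (t + 1) := by
    rw [Sjac, Finset.mul_sum]
    apply Finset.sum_congr rfl
    intro t _
    ring
  simp only [Nat.choose_zero_right, pow_zero, mul_one] at h3 ⊢
  omega

lemma Sjac_vals (m : ℕ) :
    3 * Sjac (2 * m) = 2 ^ (2 * m + 1) + 1 ∧ 3 * Sjac (2 * m + 1) + 1 = 2 ^ (2 * m + 2) := by
  induction m with
  | zero => simp [Sjac_zero, Sjac_one]
  | succ m ih =>
    obtain ⟨h1, h2⟩ := ih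
    have r1 := Sjac_rec (2 * m)
    have r2 := Sjac_rec (2 * m + 1)
    rw [show 2 * m + 1 + 2 = 2 * m + 3 by omega, show 2 * m + 1 + 1 = 2 * m + 2 by omega] at r2
    have p1 : (2:ℕ) ^ (2 * m + 2) = 2 * 2 ^ (2 * m + 1) := by
      rw [show 2 * m + 2 = (2 * m + 1) + 1 by omega, pow_succ]; ring
    have p2 : (2:ℕ) ^ (2 * m + 3) = 2 * 2 ^ (2 * m + 2) := by
      rw [show 2 * m + 3 = (2 * m + 2) + 1 by omega, pow_succ]; ring
    have p3 : (2:ℕ) ^ (2 * m + 4) = 2 * 2 ^ (2 * m + 3) := by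
      rw [show 2 * m + 4 = (2 * m + 3) + 1 by omega, pow_succ]; ring
    constructor
    · rw [show 2 * (m + 1) + 1 = 2 * m + 3 by ring, show 2 * (m + 1) = 2 * m + 2 by ring]
      omega
    · rw [show 2 * (m + 1) + 2 = 2 * m + 4 by ring, show 2 * (m + 1) + 1 = 2 * m + 3 by ring]
      omega

/-- The key combinatorial identity. -/
lemma key_s15 (k s : ℕ) (hs1 : 1 ≤ s) (hsk : s ≤ k) :
    (2 * k + 1) * (2 * k + 1 - s).choose s
      = (2 * k + 1 - s) * ((2 * k + 1 - s).choose s + (2 * k - s).choose (s - 1)) := by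
  set n := 2 * k + 1 - s with hn
  have hn1 : 1 ≤ n := by omega
  have hstep : n * (n - 1).choose (s - 1) = s * n.choose s := by
    have := Nat.add_one_mul_choose_eq (n - 1) (s - 1)
    have e1 : n - 1 + 1 = n := by omega
    have e2 : s - 1 + 1 = s := by omega
    rw [e1, e2] at this
    rw [this, mul_comm]
  have e3 : 2 * k - s = n - 1 := by omega
  rw [e3, Nat.mul_add, hstep]
  have : 2 * k + 1 = n + s := by omega
  rw [this, Nat.add_mul]

/-- Σ_{s=0}^{k} (N/(N-s))·C(N-s,s)·2^s = 2^N - 1 for N = 2k+1 ≥ 3: the total number of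
nonempty faces of the injective hull of the N-cycle. -/
theorem total_face_count (k : ℕ) (hk : 1 ≤ k) :
    (∀ s ≤ k, (2 * k + 1 - s) ∣ (2 * k + 1) * (2 * k + 1 - s).choose s) ∧
    ∑ s ∈ Finset.range (k + 1),
        ((2 * k + 1) * (2 * k + 1 - s).choose s / (2 * k + 1 - s)) * 2 ^ s
      = 2 ^ (2 * k + 1) - 1 := by
  have hdvd : ∀ s ≤ k, (2 * k + 1 - s) ∣ (2 * k + 1) * (2 * k + 1 - s).choose s := by
    intro s hs
    rcases Nat.eq_zero_or_pos s with rfl | hs1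
    · simp
    · exact ⟨_, key_s15 k s hs1 hs⟩
  refine ⟨hdvd, ?_⟩
  -- compute each summand for s = t+1
  have hterm : ∀ t, t < k →
      ((2 * k + 1) * (2 * k + 1 - (t + 1)).choose (t + 1) / (2 * k + 1 - (t + 1))) * 2 ^ (t + 1)
      = (2 * k - t).choose (t + 1) * 2 ^ (t + 1) + (2 * k - 1 - t).choose t * 2 ^ (t + 1) := by
    intro t ht
    have hpos : 0 < 2 * k + 1 - (t + 1) := by omega
    rw [key_s15 k (t + 1) (by omega) (by omega), Nat.mul_div_cancel_left _ hpos]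
    have e1 : 2 * k + 1 - (t + 1) = 2 * k - t := by omega
    have e2 : 2 * k - (t + 1) = 2 * k - 1 - t := by omega
    have e3 : t + 1 - 1 = t := rfl
    rw [e1, e2, e3, Nat.add_mul]
  rw [Finset.sum_range_succ']
  have hz : ((2 * k + 1) * (2 * k + 1 - 0).choose 0 / (2 * k + 1 - 0)) * 2 ^ 0 = 1 := by
    simp
  rw [hz, Finset.sum_congr rfl (fun t ht => hterm t (Finset.mem_range.mp ht)),
    Finset.sum_add_distrib]
  -- first part: 1 + Σ_{t<k} C(2k-t, t+1) 2^{t+1} = Sjac (2k+1)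
  have hA : Sjac (2 * k + 1)
      = (∑ t ∈ Finset.range k, (2 * k - t).choose (t + 1) * 2 ^ (t + 1)) + 1 := by
    rw [Sjac]
    have hsub : ∑ s ∈ Finset.range (2 * k + 2), (2 * k + 1 - s).choose s * 2 ^ s
        = ∑ s ∈ Finset.range (k + 1), (2 * k + 1 - s).choose s * 2 ^ s := by
      symm
      apply Finset.sum_subset
      · intro x hx
        simp only [Finset.mem_range] at hx ⊢
        omega
      · intro x _ hx
        simp only [Finset.mem_range, not_lt] at hx
        have : 2 * k + 1 - x < x := by omega
        simp [Nat.choose_eq_zero_of_lt this]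
    rw [hsub, Finset.sum_range_succ']
    simp only [Nat.choose_zero_right, pow_zero, mul_one, Nat.sub_zero]
    congr 1
    apply Finset.sum_congr rfl
    intro t ht
    congr 2
    omega
  -- second part: Σ_{t<k} C(2k-1-t, t) 2^{t+1} = 2 * Sjac (2k-1)
  have hB : 2 * Sjac (2 * k - 1)
      = ∑ t ∈ Finset.range k, (2 * k - 1 - t).choose t * 2 ^ (t + 1) := by
    rw [Sjac, Finset.mul_sum]
    have hsub : ∑ s ∈ Finset.range (2 * k - 1 + 1), 2 * ((2 * k - 1 - s).choose s * 2 ^ s)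
        = ∑ s ∈ Finset.range k, 2 * ((2 * k - 1 - s).choose s * 2 ^ s) := by
      symm
      apply Finset.sum_subset
      · intro x hx
        simp only [Finset.mem_range] at hx ⊢
        omega
      · intro x _ hx
        simp only [Finset.mem_range, not_lt] at hx
        have : 2 * k - 1 - x < x := by omega
        simp [Nat.choose_eq_zero_of_lt this]
    rw [hsub]
    apply Finset.sum_congr rfl
    intro t _
    ring
  -- combine with Sjac_vals
  have hv1 := (Sjac_vals k).2
  have hv2' := (Sjac_vals (k - 1)).2
  have hv2 : 3 * Sjac (2 * k - 1) + 1 = 2 ^ (2 * k) := by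
    rw [show 2 * k - 1 = 2 * (k - 1) + 1 by omega, show 2 * k = 2 * (k - 1) + 2 by omega]
    exact hv2'
  have p1 := pow_add 2 (2 * k) 2
  have p2 := pow_add 2 (2 * k) 1
  norm_num at p1 p2
  omega
end

section
/- For odd N = 2k+1, Σ_{s=0}^{k} (N/(N-s))·C(N-s, s) equals the N-th Lucas number L_N = φ^N + (1-φ)^N, where φ = (1+√5)/2. -/
/-- Lucas numbers: L_0 = 2, L_1 = 1, L_{n+2} = L_{n+1} + L_n. -/
def lucas : ℕ → ℕ
  | 0 => 2
  | 1 => 1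
  | n + 2 => lucas (n + 1) + lucas n

lemma fib_diag (n : ℕ) : ∑ s ∈ Finset.range (n + 1), (n - s).choose s = Nat.fib (n + 1) := by
  rw [Nat.fib_succ_eq_sum_choose, Finset.Nat.sum_antidiagonal_eq_sum_range_succ_mk,
    ← Finset.sum_range_reflect]
  apply Finset.sum_congr rfl
  intro i hi
  simp only [Finset.mem_range] at hi
  congr 1
  omega

lemma lucas_fib (n : ℕ) : lucas (n + 1) = Nat.fib n + Nat.fib (n + 2) := by
  induction n using Nat.twoStepInduction with
  | zero => simp [lucas]
  | one => simp [lucas]; rfl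
  | more n ih1 ih2 =>
    show lucas (n + 2) + lucas (n + 1) = _
    rw [ih1, ih2]
    have h1 := Nat.fib_add_two (n := n)
    have h2 := Nat.fib_add_two (n := n + 1)
    have h3 := Nat.fib_add_two (n := n + 2)
    ring_nf at h1 h2 h3 ⊢
    omega

lemma lucas_binet (n : ℕ) :
    (lucas n : ℝ) = ((1 + Real.sqrt 5) / 2) ^ n + (1 - (1 + Real.sqrt 5) / 2) ^ n := by
  have h5 : Real.sqrt 5 * Real.sqrt 5 = 5 := Real.mul_self_sqrt (by norm_num)
  set φ : ℝ := (1 + Real.sqrt 5) / 2 with hφdef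
  have hφ : φ ^ 2 = φ + 1 := by
    rw [hφdef]; field_simp; nlinarith [h5]
  have hψ : (1 - φ) ^ 2 = (1 - φ) + 1 := by nlinarith [hφ]
  induction n using Nat.twoStepInduction with
  | zero => norm_num [lucas]
  | one => norm_num [lucas]
  | more n ih1 ih2 =>
    show ((lucas (n + 1) + lucas n : ℕ) : ℝ) = _
    push_cast
    rw [ih1, ih2]
    have e1 : φ ^ (n + 2) = φ ^ n * φ ^ 2 := by ring
    have e2 : (1 - φ) ^ (n + 2) = (1 - φ) ^ n * (1 - φ) ^ 2 := by ring
    rw [e1, e2, hφ, hψ]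
    ring

/-- For odd N = 2k+1, Σ_{s=0}^{k} (N/(N-s))·C(N-s,s) equals the N-th Lucas number
L_N = φ^N + (1-φ)^N, φ = (1+√5)/2. -/
theorem vertex_count_lucas (k : ℕ) :
    lucas (2 * k + 1)
        = ∑ s ∈ Finset.range (k + 1),
            (2 * k + 1) * (2 * k + 1 - s).choose s / (2 * k + 1 - s) ∧
    (lucas (2 * k + 1) : ℝ)
        = ((1 + Real.sqrt 5) / 2) ^ (2 * k + 1)
          + (1 - (1 + Real.sqrt 5) / 2) ^ (2 * k + 1) := by
  refine ⟨?_, lucas_binet (2 * k + 1)⟩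
  rw [Finset.sum_range_succ']
  have hgt : ∀ t ∈ Finset.range k,
      (2 * k + 1) * (2 * k + 1 - (t + 1)).choose (t + 1) / (2 * k + 1 - (t + 1))
        = (2 * k - t).choose (t + 1) + (2 * k - t - 1).choose t := by
    intro t ht
    simp only [Finset.mem_range] at ht
    have hNs : 2 * k + 1 - (t + 1) = 2 * k - t := by omega
    rw [hNs]
    have hkey : (2 * k - t) * ((2 * k - t - 1).choose t)
        = (2 * k - t).choose (t + 1) * (t + 1) := by
      have h := Nat.add_one_mul_choose_eq (2 * k - t - 1) t
      have he : 2 * k - t - 1 + 1 = 2 * k - t := by omega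
      rwa [he] at h
    have hmain : (2 * k + 1) * (2 * k - t).choose (t + 1)
        = (2 * k - t) * ((2 * k - t).choose (t + 1) + (2 * k - t - 1).choose t) := by
      rw [Nat.mul_add, hkey]
      have : 2 * k + 1 = (2 * k - t) + (t + 1) := by omega
      rw [this, Nat.add_mul]
      ring
    rw [hmain, Nat.mul_div_cancel_left _ (by omega : 0 < 2 * k - t)]
  rw [Finset.sum_congr rfl hgt, Finset.sum_add_distrib]
  have h1 : (∑ t ∈ Finset.range k, (2 * k - t).choose (t + 1))
      + (2 * k + 1) * (2 * k + 1 - 0).choose 0 / (2 * k + 1 - 0)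
      = Nat.fib (2 * k + 2) := by
    have : (2 * k + 1) * (2 * k + 1 - 0).choose 0 / (2 * k + 1 - 0) = 1 := by
      simp
    rw [this]
    have hs : (∑ t ∈ Finset.range k, (2 * k - t).choose (t + 1)) + 1
        = ∑ s ∈ Finset.range (k + 1), (2 * k + 1 - s).choose s := by
      rw [Finset.sum_range_succ', Nat.sub_zero, Nat.choose_zero_right]
      congr 1
      apply Finset.sum_congr rfl
      intro t ht
      rw [show 2 * k + 1 - (t + 1) = 2 * k - t from by omega]
    rw [hs]
    rw [← fib_diag (2 * k + 1)]
    apply Finset.sum_subset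
    · intro x hx; simp only [Finset.mem_range] at *; omega
    · intro x hx1 hx2
      simp only [Finset.mem_range] at hx1 hx2
      apply Nat.choose_eq_zero_of_lt
      omega
  have h2 : ∑ t ∈ Finset.range k, (2 * k - t - 1).choose t = Nat.fib (2 * k) := by
    rcases Nat.eq_zero_or_pos k with rfl | hk
    · simp
    · have hext : ∑ t ∈ Finset.range k, (2 * k - t - 1).choose t
          = ∑ t ∈ Finset.range (2 * k), (2 * k - 1 - t).choose t := by
        rw [show ∑ t ∈ Finset.range k, (2 * k - t - 1).choose t
            = ∑ t ∈ Finset.range k, (2 * k - 1 - t).choose t from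
          Finset.sum_congr rfl fun t _ => by congr 1; omega]
        apply Finset.sum_subset
        · intro x hx; simp only [Finset.mem_range] at *; omega
        · intro x hx1 hx2
          simp only [Finset.mem_range] at hx1 hx2
          apply Nat.choose_eq_zero_of_lt
          omega
      have hfd := fib_diag (2 * k - 1)
      rw [show (2 : ℕ) * k - 1 + 1 = 2 * k from by omega] at hfd
      rw [hext, hfd]
  rw [lucas_fib (2 * k)]
  omega
end
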